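/- (Proposition 2.10, identification of the minimal volume expansion.) Let L : V → V be an invertible J-separated linear operator with J-polar decomposition L = R ∘ U (U a J-isometry, R J-symmetric with positive spectrum), and let r+_1 ≤ r+_2 ≤ … ≤ r+_p be the eigenvalues of R attached to the B-positive vectors of a B-orthogonal eigenbasis of R (the positive singular values of L). Then for every 1 ≤ d ≤ p one has σ_d(L) = r+_1 · r+_2 ⋯ r+_d. -/

import Mathlib

lemma sumdot {ι m : Type*} [Fintype ι] [Fintype m] (f : ι → m → ℝ) (w : m → ℝ) :
    dotProduct (∑ i, f i) w = ∑ i, dotProduct (f i) w := by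
  simp only [dotProduct, Finset.sum_apply, Finset.sum_mul]
  rw [Finset.sum_comm]

lemma dotsum {ι m : Type*} [Fintype ι] [Fintype m] (f : ι → m → ℝ) (w : m → ℝ) :
    dotProduct w (∑ i, f i) = ∑ i, dotProduct w (f i) := by
  simp only [dotProduct, Finset.sum_apply, Finset.mul_sum]
  rw [Finset.sum_comm]

open Matrix MatrixOrder in
theorem core_det_lemma {d : ℕ} (G H : Matrix (Fin d) (Fin d) ℝ)
    (hG : G.PosDef) (hH : H.IsHermitian) (c : Fin d → ℝ) (hc : ∀ k, 0 ≤ c k)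
    (hyp : ∀ (k : Fin d) (S : Submodule ℝ (Fin d → ℝ)), Module.finrank ℝ S = (k : ℕ) + 1 →
      ∃ y, y ∈ S ∧ y ≠ 0 ∧ c k * (y ⬝ᵥ G.mulVec y) ≤ y ⬝ᵥ H.mulVec y) :
    (∏ k, c k) * G.det ≤ H.det := by
  classical
  set C := CFC.sqrt G with hCdef
  have hCps : C.PosSemidef := (CFC.sqrt_nonneg G).posSemidef
  have hCC : C * C = G := CFC.sqrt_mul_sqrt_self G hG.posSemidef.nonneg
  have hdetC : C.det * C.det = G.det := by rw [← det_mul, hCC]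
  have hdetG : 0 < G.det := hG.det_pos
  have hdetCne : IsUnit C.det := by
    refine isUnit_iff_ne_zero.2 fun h => ?_
    rw [h, mul_zero] at hdetC; exact hdetG.ne' hdetC.symm
  have hCher : C.IsHermitian := hCps.1
  have hCsymm : Cᵀ = C := by
    have := hCher; rwa [IsHermitian, conjTranspose_eq_transpose_of_trivial] at this
  have hCinv : C * C⁻¹ = 1 := mul_nonsing_inv C hdetCne
  have hCinv' : C⁻¹ * C = 1 := nonsing_inv_mul C hdetCne
  have hCisymm : (C⁻¹)ᵀ = C⁻¹ := by rw [transpose_nonsing_inv, hCsymm]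
  set M := C⁻¹ * H * C⁻¹ with hMdef
  have hM : M.IsHermitian := by
    have h1 : (C⁻¹).IsHermitian := hCher.inv
    have h2 : M = (C⁻¹)ᴴ * H * C⁻¹ := by rw [h1.eq]
    rw [h2]
    exact isHermitian_conjTranspose_mul_mul _ hH
  set lam := hM.eigenvalues with hlam
  set v := hM.eigenvectorBasis with hv
  set σ := Tuple.sort lam with hσ
  have vdot : ∀ i j : Fin d, (⇑(v i) : Fin d → ℝ) ⬝ᵥ ⇑(v j) = if i = j then 1 else 0 := by
    intro i j
    have h3 := v.orthonormal
    rw [orthonormal_iff_ite] at h3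
    have h2 := h3 i j
    rw [← h2]
    simp [PiLp.inner_apply, dotProduct, mul_comm]
  have key : ∀ k : Fin d, c k ≤ lam (σ k) := by
    intro k
    have hk1 : (k : ℕ) + 1 ≤ d := k.isLt
    set fam : Fin ((k : ℕ) + 1) → (Fin d → ℝ) := fun j => ⇑(v (σ (Fin.castLE hk1 j))) with hfam
    have hfamdot : ∀ i j, fam i ⬝ᵥ fam j = if i = j then 1 else 0 := by
      intro i j
      rw [hfam]
      dsimp only
      rw [vdot]
      by_cases h : i = j
      · simp [h]
      · rw [if_neg h, if_neg]
        intro hh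
        exact h (Fin.castLE_injective hk1 (σ.injective hh))
    have hLI : LinearIndependent ℝ fam := by
      rw [Fintype.linearIndependent_iff]
      intro g hg j0
      have h4 := congrArg (fun z => z ⬝ᵥ fam j0) hg
      simpa [sumdot, smul_dotProduct, hfamdot, mul_ite,
        Finset.sum_ite_eq, Finset.sum_ite_eq'] using h4
    set Sp := Submodule.span ℝ (Set.range fam) with hSp
    have hSprank : Module.finrank ℝ Sp = (k : ℕ) + 1 := by
      rw [hSp, finrank_span_eq_card hLI, Fintype.card_fin]
    set E : (Fin d → ℝ) ≃ₗ[ℝ] (Fin d → ℝ) :=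
      LinearEquiv.ofLinear (Matrix.mulVecLin C⁻¹) (Matrix.mulVecLin C)
        (by rw [← Matrix.mulVecLin_mul, hCinv', Matrix.mulVecLin_one])
        (by rw [← Matrix.mulVecLin_mul, hCinv, Matrix.mulVecLin_one]) with hE
    obtain ⟨y, hyS, hy0, hineq⟩ := hyp k (Submodule.map (E : (Fin d → ℝ) →ₗ[ℝ] (Fin d → ℝ)) Sp)
      (by rw [LinearEquiv.finrank_map_eq]; exact hSprank)
    obtain ⟨w, hw, hwy⟩ := hyS
    have hwy' : C⁻¹ *ᵥ w = y := hwy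
    set z := C *ᵥ y with hz
    have hzw : z = w := by
      rw [hz, ← hwy', Matrix.mulVec_mulVec, hCinv, Matrix.one_mulVec]
    have hyz : C⁻¹ *ᵥ z = y := by
      rw [hz, Matrix.mulVec_mulVec, hCinv', Matrix.one_mulVec]
    have hz0 : z ≠ 0 := by
      intro h
      apply hy0
      rw [← hyz, h, Matrix.mulVec_zero]
    have zz : y ⬝ᵥ G *ᵥ y = z ⬝ᵥ z := by
      rw [← hCC, ← Matrix.mulVec_mulVec, dotProduct_mulVec, ← hCsymm,
        Matrix.vecMul_transpose, hCsymm]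
    have zMz : y ⬝ᵥ H *ᵥ y = z ⬝ᵥ M *ᵥ z := by
      rw [hMdef]
      rw [← Matrix.mulVec_mulVec, ← Matrix.mulVec_mulVec, hyz]
      rw [dotProduct_mulVec z C⁻¹, ← hCisymm, Matrix.vecMul_transpose, hyz]
    have hzSp : z ∈ Sp := hzw ▸ hw
    obtain ⟨a, hsum⟩ := (Submodule.mem_span_range_iff_exists_fun ℝ).1 hzSp
    have expand : ∀ b : Fin ((k : ℕ) + 1) → ℝ, z ⬝ᵥ (∑ j, b j • fam j) = ∑ j, a j * b j := by
      intro b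
      rw [← hsum, sumdot]
      refine Finset.sum_congr rfl fun i _ => ?_
      rw [smul_dotProduct, dotsum]
      simp [dotProduct_smul, hfamdot, mul_ite, Finset.sum_ite_eq,
        Finset.sum_ite_eq', smul_eq_mul]
    have zz2 : z ⬝ᵥ z = ∑ j, a j * a j := by
      rw [show (z ⬝ᵥ z) = z ⬝ᵥ (∑ j, a j • fam j) by rw [hsum]]
      exact expand a
    have hMfam : ∀ j : Fin ((k : ℕ) + 1), M *ᵥ fam j = lam (σ (Fin.castLE hk1 j)) • fam j := by
      intro j
      exact hM.mulVec_eigenvectorBasis (σ (Fin.castLE hk1 j))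
    have zMz2 : z ⬝ᵥ M *ᵥ z = ∑ j, a j * (lam (σ (Fin.castLE hk1 j)) * a j) := by
      have hMz : M *ᵥ z = ∑ j, (lam (σ (Fin.castLE hk1 j)) * a j) • fam j := by
        conv_lhs => rw [← hsum]
        rw [show M *ᵥ (∑ j, a j • fam j) = Matrix.mulVecLin M (∑ j, a j • fam j) from rfl]
        rw [map_sum]
        refine Finset.sum_congr rfl fun j _ => ?_
        rw [_root_.map_smul, Matrix.mulVecLin_apply, hMfam j, smul_smul, mul_comm]
      rw [hMz, expand]
    have zzpos : 0 < z ⬝ᵥ z := by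
      have hnn : 0 ≤ z ⬝ᵥ z := Finset.sum_nonneg fun i _ => mul_self_nonneg (z i)
      have hne : z ⬝ᵥ z ≠ 0 := fun h => hz0 (dotProduct_self_eq_zero.mp h)
      exact lt_of_le_of_ne hnn (Ne.symm hne)
    have step : z ⬝ᵥ M *ᵥ z ≤ lam (σ k) * (z ⬝ᵥ z) := by
      rw [zMz2, zz2, Finset.mul_sum]
      apply Finset.sum_le_sum
      intro j _
      have hle : Fin.castLE hk1 j ≤ k := by
        rw [Fin.le_def]
        simpa using Nat.lt_succ_iff.mp j.isLt
      have h7 : lam (σ (Fin.castLE hk1 j)) ≤ lam (σ k) := by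
        have h8 := Tuple.monotone_sort lam hle
        simpa [hσ, Function.comp] using h8
      nlinarith [mul_self_nonneg (a j), h7]
    have hfinal : c k * (z ⬝ᵥ z) ≤ lam (σ k) * (z ⬝ᵥ z) := by
      calc c k * (z ⬝ᵥ z) = c k * (y ⬝ᵥ G *ᵥ y) := by rw [zz]
        _ ≤ y ⬝ᵥ H *ᵥ y := hineq
        _ = z ⬝ᵥ M *ᵥ z := zMz
        _ ≤ lam (σ k) * (z ⬝ᵥ z) := step
    exact le_of_mul_le_mul_right (by simpa [mul_comm] using hfinal) zzpos
  have hdetM : M.det = ∏ i, lam i := by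
    have h6 := hM.det_eq_prod_eigenvalues
    simpa using h6
  have h5 : C * M * C = H := by
    rw [hMdef]
    calc C * (C⁻¹ * H * C⁻¹) * C = (C * C⁻¹) * H * (C⁻¹ * C) := by
          simp only [Matrix.mul_assoc]
      _ = H := by rw [hCinv, hCinv', Matrix.one_mul, Matrix.mul_one]
  have hdetH : H.det = G.det * M.det := by
    rw [← h5, det_mul, det_mul, ← hdetC]; ring
  have hprod : (∏ k, c k) ≤ ∏ k, lam (σ k) :=
    Finset.prod_le_prod (fun k _ => hc k) (fun k _ => key k)
  have hperm : (∏ k, lam (σ k)) = ∏ k, lam k := Equiv.prod_comp σ lam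
  calc (∏ k, c k) * G.det ≤ (∏ k, lam (σ k)) * G.det :=
        mul_le_mul_of_nonneg_right hprod hdetG.le
    _ = H.det := by rw [hperm, ← hdetM, hdetH]; ring


/-- `σ_d(L)`: the infimum, over all `d`-dimensional subspaces `W` of `V` contained
(up to `0`) in the positive cone of `J`, of the rate of volume expansion
`α_d(L; W) = sqrt( det(B(Lwᵢ, Lwⱼ)) / det(B(wᵢ, wⱼ)) )` of `L` on `W`, computed with
respect to any basis `w₁, …, w_d` of `W`. -/
noncomputable def sigmaVol {V : Type*} [AddCommGroup V] [Module ℝ V]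
    (B : V →ₗ[ℝ] V →ₗ[ℝ] ℝ) (L : V →ₗ[ℝ] V) (d : ℕ) : ℝ :=
  sInf {x : ℝ | ∃ W : Submodule ℝ V, Module.finrank ℝ W = d ∧
    (∀ v ∈ W, v ≠ 0 → 0 < B v v) ∧
    ∃ b : Module.Basis (Fin d) ℝ W,
      x = Real.sqrt
        ((Matrix.of fun i j => B (L (b i : V)) (L (b j : V))).det /
         (Matrix.of fun i j => B (b i : V) (b j : V)).det)}

set_option maxHeartbeats 3200000 in
/-- Proposition 2.10 (identification of the minimal volume expansion): let `L` be an
invertible J-separated operator with J-polar decomposition `L = R ∘ U`, and let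
`e : Fin n → V` be a B-orthogonal eigenbasis of `R` with `B(eᵢ,eᵢ) = -1` for `i < q`
and `= +1` for `i ≥ q`, `q` the index of `J`, with positive eigenvalues `μ` listed in
increasing order `r₊_1 ≤ … ≤ r₊_p` on the B-positive part (`p = n - q`). Then for
every `1 ≤ d ≤ p` one has `σ_d(L) = r₊_1 ⋯ r₊_d = μ(q) ⋯ μ(q+d-1)`. -/
theorem stmt_8
    {V : Type*} [AddCommGroup V] [Module ℝ V] [FiniteDimensional ℝ V]
    (B : V →ₗ[ℝ] V →ₗ[ℝ] ℝ)
    (hBsymm : ∀ v w : V, B v w = B w v)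
    (hBnd : ∀ v : V, (∀ w : V, B v w = 0) → v = 0)
    (hBindef : ∃ v w : V, 0 < B v v ∧ B w w < 0)
    (L R U : V →ₗ[ℝ] V)
    (hL : Function.Bijective L)
    (hsep : ∀ v : V, 0 < B v v → 0 < B (L v) (L v) ∨ L v = 0)
    (hU : ∀ v : V, B (U v) (U v) = B v v)
    (hR : ∀ v w : V, B (R v) w = B v (R w))
    (hLRU : L = R ∘ₗ U)
    (n q : ℕ)
    (e : Module.Basis (Fin n) ℝ V) (μ : Fin n → ℝ)
    (heig : ∀ i, R (e i) = μ i • e i)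
    (horth : ∀ i j, i ≠ j → B (e i) (e j) = 0)
    (hneg : ∀ i : Fin n, (i : ℕ) < q → B (e i) (e i) = -1)
    (hpos : ∀ i : Fin n, q ≤ (i : ℕ) → B (e i) (e i) = 1)
    (hμpos : ∀ i, 0 < μ i)
    (hμmono : ∀ i j : Fin n, q ≤ (i : ℕ) → i ≤ j → μ i ≤ μ j)
    (d : ℕ) (hd1 : 1 ≤ d) (hdp : q + d ≤ n) :
    sigmaVol B L d = ∏ i : Fin d, μ ⟨q + (i : ℕ), by omega⟩ := by
  classical
  set s : Fin n → ℝ := fun i => B (e i) (e i) with hsdef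
  have hBee : ∀ i j : Fin n, B (e i) (e j) = if i = j then s i else 0 := by
    intro i j
    by_cases h : i = j
    · subst h; simp [hsdef]
    · rw [if_neg h]; exact horth i j h
  have hBrepr : ∀ v w : V, B v w = ∑ i, e.repr v i * e.repr w i * s i := by
    intro v w
    conv_lhs => rw [← e.sum_repr v, ← e.sum_repr w]
    simp only [map_sum, map_smul, LinearMap.sum_apply, LinearMap.smul_apply, smul_eq_mul,
      hBee, mul_ite, mul_zero, Finset.sum_ite_eq, Finset.sum_ite_eq', Finset.mem_univ, if_true]
    exact Finset.sum_congr rfl fun i _ => by ring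
  have hBvv : ∀ v : V, B v v = ∑ i, s i * (e.repr v i) ^ 2 := by
    intro v
    rw [hBrepr v v]
    exact Finset.sum_congr rfl fun i _ => by ring
  have hRv : ∀ v : V, R v = ∑ i, (μ i * e.repr v i) • e i := by
    intro v
    conv_lhs => rw [← e.sum_repr v]
    rw [map_sum]
    refine Finset.sum_congr rfl fun i _ => ?_
    rw [map_smul, heig, smul_smul, mul_comm]
  have hRrepr : ∀ (v : V) (i : Fin n), e.repr (R v) i = μ i * e.repr v i := by
    intro v i
    rw [hRv v]
    exact congrFun (e.repr_sum_self (fun j => μ j * e.repr v j)) i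
  have hBRvRv : ∀ v : V, B (R v) (R v) = ∑ i, s i * (μ i) ^ 2 * (e.repr v i) ^ 2 := by
    intro v
    rw [hBvv (R v)]
    refine Finset.sum_congr rfl fun i _ => ?_
    rw [hRrepr]
    ring
  have hUB : ∀ v w : V, B (U v) (U w) = B v w := by
    intro v w
    have h1 := hU (v + w)
    have h2 := hU v
    have h3 := hU w
    simp only [map_add, LinearMap.add_apply] at h1
    have h4 := hBsymm v w
    have h5 := hBsymm (U v) (U w)
    linarith
  have hRker : ∀ v : V, R v = 0 → v = 0 := by
    intro v hv
    have h1 : ∀ i, e.repr v i = 0 := by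
      intro i
      have h2 := hRrepr v i
      rw [hv] at h2
      simp only [map_zero, Finsupp.coe_zero, Pi.zero_apply] at h2
      rcases mul_eq_zero.mp h2.symm with h | h
      · exact absurd h (hμpos i).ne'
      · exact h
    have h3 : e.repr v = 0 := by ext i; exact h1 i
    simpa using congrArg e.repr.symm h3
  have hRinj : Function.Injective R := by
    intro x y h
    have := hRker (x - y) (by rw [map_sub, h, sub_self])
    exact sub_eq_zero.mp this
  have hUL : ∀ v : V, L v = R (U v) := fun v => by rw [hLRU]; rfl
  have hUinj : Function.Injective U := fun x y h => hL.1 (by rw [hUL, hUL, h])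
  have hUsurj : Function.Surjective U := by
    intro w
    obtain ⟨v, hv⟩ := hL.2 (R w)
    exact ⟨v, hRinj (by rw [← hUL, hv])⟩
  have hsepR : ∀ v : V, 0 < B v v → 0 < B (R v) (R v) := by
    intro v hv
    obtain ⟨u, hu⟩ := hUsurj v
    have hBu : 0 < B u u := by rw [← hUB u u, hu]; exact hv
    have hv0 : v ≠ 0 := by rintro rfl; simp at hv
    rcases hsep u hBu with h | h
    · rwa [hUL, hu] at h
    · rw [hUL, hu] at h
      exact absurd (hRker _ h) hv0
  have hμorder : ∀ i j : Fin n, (i : ℕ) < q → q ≤ (j : ℕ) → μ i ≤ μ j := by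
    intro i j hi hj
    by_contra hlt
    push_neg at hlt
    have hij : i ≠ j := fun h => by rw [h] at hi; omega
    set t := Real.sqrt (μ i / μ j) with ht
    have ht2 : t ^ 2 = μ i / μ j := Real.sq_sqrt (div_nonneg (hμpos i).le (hμpos j).le)
    set v := e i + t • e j with hvdef
    have hBvv' : B v v = -1 + t ^ 2 := by
      simp only [hvdef, map_add, map_smul, LinearMap.add_apply, LinearMap.smul_apply,
        smul_eq_mul, hneg i hi, hpos j hj, horth i j hij, horth j i hij.symm]
      ring
    have hRv' : R v = μ i • e i + (t * μ j) • e j := by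
      rw [hvdef, map_add, map_smul, heig, heig, smul_smul]
    have hBRv : B (R v) (R v) = -(μ i ^ 2) + t ^ 2 * μ j ^ 2 := by
      rw [hRv']
      simp only [map_add, map_smul, LinearMap.add_apply, LinearMap.smul_apply,
        smul_eq_mul, hneg i hi, hpos j hj, horth i j hij, horth j i hij.symm]
      ring
    have hpos1 : 0 < B v v := by
      rw [hBvv', ht2]
      have h7 := hμpos j
      have : 1 < μ i / μ j := (one_lt_div h7).mpr hlt
      linarith
    have h8 := hsepR v hpos1
    rw [hBRv, ht2] at h8
    have h9 : μ i / μ j * μ j ^ 2 = μ i * μ j := by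
      have h7 := (hμpos j).ne'
      field_simp
    rw [h9] at h8
    nlinarith [hμpos i, hμpos j]
  -- Gram identity
  have dotGram : ∀ (f : Fin d → V) (y : Fin d → ℝ),
      dotProduct y ((Matrix.of fun i j => B (f i) (f j)).mulVec y) =
        B (∑ i, y i • f i) (∑ j, y j • f j) := by
    intro f y
    simp only [dotProduct, Matrix.mulVec, Matrix.of_apply, map_sum, map_smul,
      LinearMap.sum_apply, LinearMap.smul_apply, smul_eq_mul, Finset.mul_sum]
    refine Finset.sum_congr rfl fun i _ => Finset.sum_congr rfl fun j _ => by
      rw [hBsymm (f i) (f j)]; ring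
  -- vanishing of coordinates for members of coordinate subspaces
  have hvanish : ∀ (A : Set (Fin n)) (x : V), x ∈ Submodule.span ℝ (e '' A) →
      ∀ i ∉ A, e.repr x i = 0 := by
    intro A x hx i hi
    have hle : Submodule.span ℝ (e '' A) ≤
        LinearMap.ker ((Finsupp.lapply i).comp (e.repr : V →ₗ[ℝ] (Fin n →₀ ℝ))) := by
      rw [Submodule.span_le]
      rintro _ ⟨j, hj, rfl⟩
      have hji : j ≠ i := fun h => hi (h ▸ hj)
      simp [LinearMap.mem_ker, Module.Basis.repr_self, Finsupp.single_apply, hji]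
    exact hle hx
  -- the product
  set g : Fin d → Fin n := fun i => ⟨q + (i : ℕ), by omega⟩ with hgdef
  have hginj : Function.Injective g := by
    intro a b h
    have : q + (a : ℕ) = q + (b : ℕ) := congrArg Fin.val h
    exact Fin.ext (by omega)
  set m : ℝ := ∏ i : Fin d, μ (g i) with hmdef
  have hmpos : 0 < m := Finset.prod_pos fun i _ => hμpos _
  -- the isometry as an equivalence
  set Ue : V ≃ₗ[ℝ] V := LinearEquiv.ofBijective U ⟨hUinj, hUsurj⟩ with hUe
  have hUeapp : ∀ v : V, Ue v = U v := fun v => rfl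
  -- membership witness
  set w : Fin d → V := fun i => Ue.symm (e (g i)) with hwdef
  have hUw : ∀ i, U (w i) = e (g i) := by
    intro i
    rw [← hUeapp]
    exact Ue.apply_symm_apply (e (g i))
  have hwli : LinearIndependent ℝ w := by
    have h1 : LinearIndependent ℝ (fun i => e (g i)) := e.linearIndependent.comp g hginj
    have h2 := h1.map' Ue.symm.toLinearMap Ue.symm.ker
    exact h2
  set W0 : Submodule ℝ V := Submodule.span ℝ (Set.range w) with hW0
  set b0 : Module.Basis (Fin d) ℝ W0 := Module.Basis.span hwli with hb0
  have hb0coe : ∀ i, (b0 i : V) = w i := fun i => congrArg Subtype.val (Module.Basis.span_apply hwli i)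
  have hW0rank : Module.finrank ℝ W0 = d := by
    rw [hW0, finrank_span_eq_card hwli, Fintype.card_fin]
  have hW0pos : ∀ v ∈ W0, v ≠ 0 → 0 < B v v := by
    intro v hv hv0
    have hUv : U v ∈ Submodule.span ℝ (e '' Set.range g) := by
      have h1 : U v ∈ Submodule.map U W0 := ⟨v, hv, rfl⟩
      rw [hW0, Submodule.map_span, ← Set.range_comp] at h1
      have h2 : Set.range (U ∘ w) = e '' Set.range g := by
        rw [show U ∘ w = e ∘ g from funext hUw]
        exact Set.range_comp e g
      rwa [h2] at h1
    have hUv0 : U v ≠ 0 := fun h => hv0 (hUinj (h.trans (map_zero U).symm))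
    have hvr : ∃ i, e.repr (U v) i ≠ 0 := by
      by_contra hc
      push_neg at hc
      exact hUv0 (by simpa using congrArg e.repr.symm (Finsupp.ext hc :
        e.repr (U v) = (0 : Fin n →₀ ℝ)))
    obtain ⟨i0, hi0⟩ := hvr
    have hi0g : i0 ∈ Set.range g := by
      by_contra hc
      exact hi0 (hvanish _ _ hUv i0 hc)
    have hBv : B v v = B (U v) (U v) := (hUB v v).symm
    rw [hBv, hBvv (U v)]
    apply Finset.sum_pos'
    · intro i _
      by_cases hig : i ∈ Set.range g
      · obtain ⟨j, rfl⟩ := hig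
        have : s (g j) = 1 := hpos (g j) (Nat.le_add_right q _)
        rw [this]
        positivity
      · have : e.repr (U v) i = 0 := hvanish _ _ hUv i hig
        rw [this]
        simp
    · refine ⟨i0, Finset.mem_univ _, ?_⟩
      obtain ⟨j, rfl⟩ := hi0g
      have : s (g j) = 1 := hpos (g j) (Nat.le_add_right q _)
      rw [this]
      have h11 : 0 < e.repr (U v) (g j) ^ 2 := by positivity
      nlinarith
  have hLw : ∀ i, L (w i) = μ (g i) • e (g i) := by
    intro i
    rw [hUL, hUw, heig]
  have hmem : m ∈ {x : ℝ | ∃ W : Submodule ℝ V, Module.finrank ℝ W = d ∧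
      (∀ v ∈ W, v ≠ 0 → 0 < B v v) ∧
      ∃ b : Module.Basis (Fin d) ℝ W,
        x = Real.sqrt
          ((Matrix.of fun i j => B (L (b i : V)) (L (b j : V))).det /
           (Matrix.of fun i j => B (b i : V) (b j : V)).det)} := by
    refine ⟨W0, hW0rank, hW0pos, b0, ?_⟩
    have hnum : (Matrix.of fun i j => B (L (b0 i : V)) (L (b0 j : V))) =
        Matrix.diagonal (fun i => μ (g i) ^ 2) := by
      ext i j
      rw [Matrix.of_apply, hb0coe, hb0coe, hLw, hLw]
      simp only [map_smul, LinearMap.smul_apply, smul_eq_mul]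
      by_cases h : i = j
      · subst h
        rw [Matrix.diagonal_apply_eq]
        have : s (g i) = 1 := hpos (g i) (Nat.le_add_right q _)
        rw [show B (e (g i)) (e (g i)) = s (g i) from rfl, this]
        ring
      · rw [Matrix.diagonal_apply_ne _ h, horth _ _ (fun hh => h (hginj hh))]
        ring
    have hden : (Matrix.of fun i j => B (b0 i : V) (b0 j : V)) = 1 := by
      ext i j
      rw [Matrix.of_apply, hb0coe, hb0coe, ← hUB, hUw, hUw]
      by_cases h : i = j
      · subst h
        rw [Matrix.one_apply_eq]
        exact hpos (g i) (Nat.le_add_right q _)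
      · rw [Matrix.one_apply_ne h]
        exact horth _ _ (fun hh => h (hginj hh))
    rw [hnum, hden, Matrix.det_diagonal, Matrix.det_one, div_one, Finset.prod_pow]
    rw [Real.sqrt_sq hmpos.le]
  have hfinV : Module.finrank ℝ V = n := by
    rw [Module.finrank_eq_card_basis e, Fintype.card_fin]
  have hlower : ∀ x' ∈ {x : ℝ | ∃ W : Submodule ℝ V, Module.finrank ℝ W = d ∧
      (∀ v ∈ W, v ≠ 0 → 0 < B v v) ∧
      ∃ b : Module.Basis (Fin d) ℝ W,
        x = Real.sqrt
          ((Matrix.of fun i j => B (L (b i : V)) (L (b j : V))).det /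
           (Matrix.of fun i j => B (b i : V) (b j : V)).det)}, m ≤ x' := by
    rintro x' ⟨W, hWrank, hWpos, b, rfl⟩
    set f : Fin d → V := fun i => (b i : V) with hfdef
    set φ : (Fin d → ℝ) →ₗ[ℝ] V := Fintype.linearCombination ℝ f with hφ
    have hφapp : ∀ y, φ y = ∑ i, y i • f i := fun y => Fintype.linearCombination_apply ℝ f y
    have hφmem : ∀ y, φ y ∈ W := by
      intro y
      rw [hφapp]
      exact Submodule.sum_mem _ fun i _ => Submodule.smul_mem _ _ (b i).2
    have hφker : ∀ y, φ y = 0 → y = 0 := by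
      intro y hy
      have h1 : ((∑ i, y i • b i : W) : V) = 0 := by
        rw [← hy, hφapp]
        simp [hfdef]
      have h2 : (∑ i, y i • b i : W) = 0 := by
        exact_mod_cast h1
      funext i
      exact Fintype.linearIndependent_iff.mp b.linearIndependent y h2 i
    have hφinj : Function.Injective φ := by
      intro a b' hab
      have := hφker (a - b') (by rw [map_sub, hab, sub_self])
      exact sub_eq_zero.mp this
    have hφne : ∀ y : Fin d → ℝ, y ≠ 0 → φ y ≠ 0 := fun y hy h => hy (hφker y h)
    set Gm := Matrix.of fun i j => B (f i) (f j) with hGm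
    set Am := Matrix.of fun i j => B (L (f i)) (L (f j)) with hAm
    have hGquad : ∀ y : Fin d → ℝ, dotProduct y (Gm.mulVec y) = B (φ y) (φ y) := by
      intro y
      rw [hφapp]
      exact dotGram f y
    have hAquad : ∀ y : Fin d → ℝ, dotProduct y (Am.mulVec y) = B (L (φ y)) (L (φ y)) := by
      intro y
      rw [hφapp, map_sum]
      have := dotGram (fun i => L (f i)) y
      simp only [map_smul] at this ⊢
      exact this
    have hGpd : Gm.PosDef := by
      rw [Matrix.posDef_iff_dotProduct_mulVec]
      constructor
      · ext i j
        simp only [Matrix.conjTranspose_apply, Matrix.of_apply, star_trivial, hGm]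
        exact hBsymm (f j) (f i)
      · intro y hy
        rw [star_trivial, hGquad]
        exact hWpos (φ y) (hφmem y) (hφne y hy)
    have hApd : Am.PosDef := by
      rw [Matrix.posDef_iff_dotProduct_mulVec]
      constructor
      · ext i j
        simp only [Matrix.conjTranspose_apply, Matrix.of_apply, star_trivial, hAm]
        exact hBsymm (L (f j)) (L (f i))
      · intro y hy
        rw [star_trivial, hAquad]
        have hB0 : 0 < B (φ y) (φ y) := hWpos (φ y) (hφmem y) (hφne y hy)
        rcases hsep (φ y) hB0 with h | h
        · exact h
        · exact absurd (hL.1 (h.trans (map_zero L).symm)) (hφne y hy)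
    have hyp : ∀ (k : Fin d) (S : Submodule ℝ (Fin d → ℝ)),
        Module.finrank ℝ S = (k : ℕ) + 1 →
        ∃ y, y ∈ S ∧ y ≠ 0 ∧
          (μ (g k) ^ 2) * dotProduct y (Gm.mulVec y) ≤ dotProduct y (Am.mulVec y) := by
      intro k S hS
      set ψ : (Fin d → ℝ) →ₗ[ℝ] V := U ∘ₗ φ with hψ
      have hψinj : Function.Injective ψ := by
        intro a b' hab
        exact hφinj (hUinj hab)
      set P := Submodule.map ψ S with hP
      have hPrank : Module.finrank ℝ P = (k : ℕ) + 1 := by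
        rw [hP, ← hS]
        exact (Submodule.equivMapOfInjective ψ hψinj S).finrank_eq.symm
      set A : Set (Fin n) := {i | (i : ℕ) < q ∨ q + (k : ℕ) ≤ (i : ℕ)} with hA
      set T := Submodule.span ℝ (e '' A) with hT
      have hkd : (k : ℕ) < d := k.isLt
      set hmap : Fin (n - (k : ℕ)) → Fin n := fun j =>
        ⟨if (j : ℕ) < q then (j : ℕ) else (j : ℕ) + (k : ℕ), by
          have := j.2; split_ifs <;> omega⟩ with hhm
      have hminj : Function.Injective hmap := by
        intro a b' hab
        have h1 := congrArg Fin.val hab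
        have ha := a.2
        have hb := b'.2
        simp only [hhm] at h1
        apply Fin.ext
        split_ifs at h1 <;> omega
      have hmmem : ∀ j, hmap j ∈ A := by
        intro j
        simp only [hA, Set.mem_setOf_eq, hhm]
        split_ifs with h
        · exact Or.inl h
        · right; omega
      have hTge : n - (k : ℕ) ≤ Module.finrank ℝ T := by
        have hli : LinearIndependent ℝ (fun j => e (hmap j)) :=
          e.linearIndependent.comp hmap hminj
        have hsub : Submodule.span ℝ (Set.range (fun j => e (hmap j))) ≤ T := by
          rw [hT]
          apply Submodule.span_le.2
          rintro _ ⟨j, rfl⟩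
          exact Submodule.subset_span ⟨hmap j, hmmem j, rfl⟩
        calc n - (k : ℕ) = Module.finrank ℝ (Submodule.span ℝ
              (Set.range (fun j => e (hmap j)))) := by
              rw [finrank_span_eq_card hli, Fintype.card_fin]
          _ ≤ Module.finrank ℝ T := Submodule.finrank_mono hsub
      have hPT : P ⊓ T ≠ ⊥ := by
        intro hbot
        have h1 := Submodule.finrank_sup_add_finrank_inf_eq P T
        have h2 : Module.finrank ℝ ↥(P ⊔ T) ≤ n := hfinV ▸ Submodule.finrank_le _
        rw [hbot, finrank_bot, add_zero] at h1
        omega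
      obtain ⟨u, hu, hu0⟩ := Submodule.exists_mem_ne_zero_of_ne_bot hPT
      obtain ⟨huP, huT⟩ := (Submodule.mem_inf.mp hu)
      obtain ⟨y, hyS, hyu⟩ := huP
      have hy0 : y ≠ 0 := by
        rintro rfl
        rw [map_zero] at hyu
        exact hu0 hyu.symm
      refine ⟨y, hyS, hy0, ?_⟩
      have hUφ : U (φ y) = u := hyu
      have hq1 : dotProduct y (Gm.mulVec y) = B u u := by
        rw [hGquad, ← hUB (φ y) (φ y), hUφ]
      have hq2 : dotProduct y (Am.mulVec y) = B (R u) (R u) := by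
        rw [hAquad, hUL (φ y), hUφ]
      have hmid : ∀ i : Fin n, q ≤ (i : ℕ) → (i : ℕ) < q + (k : ℕ) → e.repr u i = 0 := by
        intro i h1 h2
        refine hvanish A u huT i ?_
        intro hc
        simp only [hA, Set.mem_setOf_eq] at hc
        omega
      have hineq : μ (g k) ^ 2 * B u u ≤ B (R u) (R u) := by
        rw [hBvv u, hBRvRv u, Finset.mul_sum, ← sub_nonneg, ← Finset.sum_sub_distrib]
        apply Finset.sum_nonneg
        intro i _
        by_cases h1 : (i : ℕ) < q
        · have hsi : s i = -1 := hneg i h1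
          have hle : μ i ≤ μ (g k) := hμorder i (g k) h1 (Nat.le_add_right q _)
          have hp : μ i ^ 2 ≤ μ (g k) ^ 2 := pow_le_pow_left₀ (hμpos i).le hle 2
          have hnn := mul_nonneg (sub_nonneg.2 hp) (sq_nonneg (e.repr u i))
          rw [hsi]
          nlinarith [hnn]
        · by_cases h2 : (i : ℕ) < q + (k : ℕ)
          · rw [hmid i (by omega) h2]
            ring_nf
            simp
          · have hsi : s i = 1 := hpos i (by omega)
            have hle : μ (g k) ≤ μ i := hμmono (g k) i (Nat.le_add_right q _)
              (by rw [Fin.le_def]; show q + (k : ℕ) ≤ (i : ℕ); omega)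
            have hp : μ (g k) ^ 2 ≤ μ i ^ 2 := pow_le_pow_left₀ (hμpos (g k)).le hle 2
            have hnn := mul_nonneg (sub_nonneg.2 hp) (sq_nonneg (e.repr u i))
            rw [hsi]
            nlinarith [hnn]
      rw [hq1, hq2]
      exact hineq
    have hcore := core_det_lemma Gm Am hGpd hApd.1 (fun k => μ (g k) ^ 2)
      (fun k => sq_nonneg _) hyp
    have hGdet : 0 < Gm.det := hGpd.det_pos
    have hprodsq : (∏ k : Fin d, μ (g k) ^ 2) = m ^ 2 := by
      rw [hmdef, Finset.prod_pow]
    rw [hprodsq] at hcore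
    have h2 : m ^ 2 ≤ Am.det / Gm.det := (le_div_iff₀ hGdet).2 hcore
    calc m = Real.sqrt (m ^ 2) := (Real.sqrt_sq hmpos.le).symm
      _ ≤ Real.sqrt (Am.det / Gm.det) := Real.sqrt_le_sqrt h2
  show sInf _ = m
  exact le_antisymm (csInf_le ⟨m, hlower⟩ hmem) (le_csInf ⟨m, hmem⟩ hlower)
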